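/- For 0 < α ≤ 1, the function Q_α(z) = 2z P_α'(z) + 1 − P_α(z)², where P_α(z) = ((1+z)/(1−z))^α (principal branch), has all Taylor coefficients about z = 0 nonnegative (real and ≥ 0). -/

import Mathlib

open Complex Metric Topology Filter


noncomputable def bseq (c : ℝ) : ℕ → ℝ
  | 0 => 1
  | 1 => c
  | n + 2 => ((n : ℝ) * bseq c n + c * bseq c (n + 1)) / (n + 2)

lemma bseq_nonneg {c : ℝ} (hc : 0 ≤ c) (n : ℕ) : 0 ≤ bseq c n := by
  induction n using Nat.strong_induction_on with
  | _ n ih =>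
    match n with
    | 0 => simp [bseq]
    | 1 => simpa [bseq] using hc
    | (m+2) =>
      have h0 := ih m (by omega)
      have h1 := ih (m+1) (by omega)
      simp only [bseq]
      positivity

lemma dlem {α : ℝ} (hα0 : 0 < α) (hα1 : α ≤ 1) :
    ∀ m, 1 ≤ m → α * bseq (2*α) (m+1) ≤ bseq (2*α) m := by
  have hsq : α^2 ≤ 1 := by nlinarith
  intro m
  induction m using Nat.strong_induction_on with
  | _ m ih =>
    match m with
    | 0 => intro h; omega
    | 1 =>
      intro _; simp only [bseq]; push_cast; norm_num
      have h3 : α^3 ≤ α := by nlinarith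
      nlinarith
    | 2 =>
      intro _; simp only [bseq]; push_cast; norm_num
      have h4 : α^4 ≤ α^2 := by nlinarith [sq_nonneg α]
      nlinarith
    | (m+3) =>
      intro _
      have IH := ih (m+1) (by omega) (by omega)
      have h2 := bseq_nonneg (by linarith : (0:ℝ) ≤ 2*α) (m+2)
      have h3 := bseq_nonneg (by linarith : (0:ℝ) ≤ 2*α) (m+3)
      have e4 : bseq (2*α) (m+4) = ((m+2) * bseq (2*α) (m+2) + (2*α) * bseq (2*α) (m+3)) / (m+4) := by
        show bseq (2*α) ((m+2)+2) = _
        simp only [bseq]; push_cast; ring_nf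
      have e3 : bseq (2*α) (m+3) = ((m+1) * bseq (2*α) (m+1) + (2*α) * bseq (2*α) (m+2)) / (m+3) := by
        show bseq (2*α) ((m+1)+2) = _
        simp only [bseq]; push_cast; ring_nf
      have key : α * bseq (2*α) (m+2) ≤ bseq (2*α) (m+3) := by
        rw [e3, le_div_iff₀ (by positivity)]
        nlinarith
      rw [e4, ← mul_div_assoc, div_le_iff₀ (by positivity)]
      nlinarith [mul_le_mul_of_nonneg_left key (by positivity : (0:ℝ) ≤ (m:ℝ)+2),
        mul_nonneg (sub_nonneg.mpr hsq) h3]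

lemma qlem {α : ℝ} (hα0 : 0 < α) (hα1 : α ≤ 1) :
    ∀ n, 1 ≤ n → 0 ≤ 2 * n * bseq (2*α) n - bseq (2*(2*α)) n := by
  intro n
  induction n using Nat.strong_induction_on with
  | _ n ih =>
    match n with
    | 0 => intro h; omega
    | 1 => intro _; simp only [bseq]; push_cast; norm_num
    | 2 => intro _; simp only [bseq]; push_cast; norm_num; nlinarith
    | (m+3) =>
      intro _
      have IH1 := ih (m+1) (by omega) (by omega)
      have IH2 := ih (m+2) (by omega) (by omega)
      have hd := dlem hα0 hα1 (m+1) (by omega)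
      have ht1 := bseq_nonneg (by linarith : (0:ℝ) ≤ 2*α) (m+1)
      have ht2 := bseq_nonneg (by linarith : (0:ℝ) ≤ 2*α) (m+2)
      have et : bseq (2*α) (m+3) = ((m+1) * bseq (2*α) (m+1) + (2*α) * bseq (2*α) (m+2)) / (m+3) := by
        show bseq (2*α) ((m+1)+2) = _
        simp only [bseq]; push_cast; ring_nf
      have es : bseq (2*(2*α)) (m+3) = ((m+1) * bseq (2*(2*α)) (m+1) + (2*(2*α)) * bseq (2*(2*α)) (m+2)) / (m+3) := by
        show bseq (2*(2*α)) ((m+1)+2) = _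
        simp only [bseq]; push_cast; ring_nf
      have et' : ((m:ℝ)+3) * bseq (2*α) (m+3) = (m+1) * bseq (2*α) (m+1) + (2*α) * bseq (2*α) (m+2) := by
        rw [et]; field_simp
      have es' : ((m:ℝ)+3) * bseq (2*(2*α)) (m+3) = (m+1) * bseq (2*(2*α)) (m+1) + (2*(2*α)) * bseq (2*(2*α)) (m+2) := by
        rw [es]; field_simp
      have hx : (0:ℝ) < (m:ℝ)+3 := by positivity
      rw [← mul_nonneg_iff_of_pos_left hx]
      have key : ((m:ℝ)+3) * (2 * ((m+3:ℕ):ℝ) * bseq (2*α) (m+3) - bseq (2*(2*α)) (m+3))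
          = 2*((m:ℝ)+3)*((m+1) * bseq (2*α) (m+1) + (2*α) * bseq (2*α) (m+2))
            - ((m+1) * bseq (2*(2*α)) (m+1) + (2*(2*α)) * bseq (2*(2*α)) (m+2)) := by
        push_cast
        linear_combination (2*((m:ℝ)+3)) * et' - es'
      rw [key]
      push_cast at IH1 IH2 ⊢
      nlinarith [mul_le_mul_of_nonneg_left IH1 (by positivity : (0:ℝ) ≤ (m:ℝ)+1),
        mul_le_mul_of_nonneg_left IH2 (by linarith : (0:ℝ) ≤ 4*α),
        mul_le_mul_of_nonneg_left hd (by positivity : (0:ℝ) ≤ 4*((m:ℝ)+1)),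
        mul_nonneg hα0.le ht2]

noncomputable def Pfun (β : ℝ) : ℂ → ℂ := fun z => Complex.exp ((β:ℂ) * Complex.log ((1+z)/(1-z)))

lemma ball_facts {z : ℂ} (hz : z ∈ ball (0:ℂ) 1) :
    (1 - z) ≠ 0 ∧ (1 + z) ≠ 0 ∧ ((1+z)/(1-z)) ∈ slitPlane := by
  rw [mem_ball_zero_iff] at hz
  have h1 : (1 - z) ≠ 0 := by
    intro h
    have : z = 1 := by linear_combination -h
    rw [this] at hz; simp at hz
  have h2 : (1 + z) ≠ 0 := by
    intro h
    have : z = -1 := by linear_combination h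
    rw [this] at hz; simp at hz
  refine ⟨h1, h2, ?_⟩
  rw [mem_slitPlane_iff]
  left
  rw [div_re]
  have hN : 0 < normSq (1 - z) := normSq_pos.mpr h1
  have hre : (1+z).re * (1-z).re + (1+z).im * (1-z).im = 1 - normSq z := by
    simp [normSq_apply]
    ring
  have hza : ‖z‖ < 1 := hz
  have hz2 : normSq z < 1 := by
    rw [Complex.normSq_eq_norm_sq]
    nlinarith [norm_nonneg z]
  rw [← add_div, hre]
  exact div_pos (by linarith) hN

lemma Pfun_analytic (β : ℝ) : AnalyticOnNhd ℂ (Pfun β) (ball (0:ℂ) 1) := by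
  intro z hz
  obtain ⟨h1, h2, hs⟩ := ball_facts hz
  exact (analyticAt_const.mul (((analyticAt_const.add analyticAt_id).div
    (analyticAt_const.sub analyticAt_id) h1).clog hs)).cexp

lemma Pfun_deriv_eq (β : ℝ) {z : ℂ} (hz : z ∈ ball (0:ℂ) 1) :
    deriv (Pfun β) z = 2*(β:ℂ) * Pfun β z + z^2 * deriv (Pfun β) z := by
  obtain ⟨h1, h2, hs⟩ := ball_facts hz
  have hw : HasDerivAt (fun ζ : ℂ => (1+ζ)/(1-ζ))
      ((1*(1-z) - (1+z)*(-1))/(1-z)^2) z := by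
    exact ((hasDerivAt_id z).const_add 1).div ((hasDerivAt_id z).const_sub 1) h1
  have hl := hw.clog hs
  have he := (hl.const_mul (β:ℂ)).cexp
  have hd : deriv (Pfun β) z
      = Complex.exp ((β:ℂ) * Complex.log ((1+z)/(1-z)))
        * ((β:ℂ) * ((1*(1-z) - (1+z)*(-1))/(1-z)^2 / ((1+z)/(1-z)))) := he.deriv
  rw [hd]
  show _ = 2*(β:ℂ) * Complex.exp ((β:ℂ) * Complex.log ((1+z)/(1-z))) + _
  field_simp
  ring

section LocalDeriv

variable {s : Set ℂ} (hs : IsOpen s)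

lemma itD_analytic {h : ℂ → ℂ} (hh : AnalyticOnNhd ℂ h s) (n : ℕ) :
    AnalyticOnNhd ℂ (iteratedDeriv n h) s := by
  rw [iteratedDeriv_eq_iterate]; exact hh.iterated_deriv n

include hs in
lemma itD_add {f g : ℂ → ℂ} (hf : AnalyticOnNhd ℂ f s) (hg : AnalyticOnNhd ℂ g s) (n : ℕ) :
    ∀ x ∈ s, iteratedDeriv n (fun z => f z + g z) x
      = iteratedDeriv n f x + iteratedDeriv n g x := by
  induction n with
  | zero => intro x hx; simp
  | succ n IH =>
    intro x hx
    have hev : iteratedDeriv n (fun z => f z + g z)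
        =ᶠ[𝓝 x] (fun z => iteratedDeriv n f z + iteratedDeriv n g z) := by
      filter_upwards [hs.mem_nhds hx] with y hy using IH y hy
    rw [iteratedDeriv_succ, hev.deriv_eq,
      deriv_fun_add ((itD_analytic hf n x hx).differentiableAt)
        ((itD_analytic hg n x hx).differentiableAt),
      ← iteratedDeriv_succ, ← iteratedDeriv_succ]

include hs in
lemma itD_sub {f g : ℂ → ℂ} (hf : AnalyticOnNhd ℂ f s) (hg : AnalyticOnNhd ℂ g s) (n : ℕ) :
    ∀ x ∈ s, iteratedDeriv n (fun z => f z - g z) x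
      = iteratedDeriv n f x - iteratedDeriv n g x := by
  induction n with
  | zero => intro x hx; simp
  | succ n IH =>
    intro x hx
    have hev : iteratedDeriv n (fun z => f z - g z)
        =ᶠ[𝓝 x] (fun z => iteratedDeriv n f z - iteratedDeriv n g z) := by
      filter_upwards [hs.mem_nhds hx] with y hy using IH y hy
    rw [iteratedDeriv_succ, hev.deriv_eq,
      deriv_fun_sub ((itD_analytic hf n x hx).differentiableAt)
        ((itD_analytic hg n x hx).differentiableAt),
      ← iteratedDeriv_succ, ← iteratedDeriv_succ]

include hs in
lemma itD_cmul (c : ℂ) {f : ℂ → ℂ} (hf : AnalyticOnNhd ℂ f s) (n : ℕ) :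
    ∀ x ∈ s, iteratedDeriv n (fun z => c * f z) x = c * iteratedDeriv n f x := by
  induction n with
  | zero => intro x hx; simp
  | succ n IH =>
    intro x hx
    have hev : iteratedDeriv n (fun z => c * f z)
        =ᶠ[𝓝 x] (fun z => c * iteratedDeriv n f z) := by
      filter_upwards [hs.mem_nhds hx] with y hy using IH y hy
    rw [iteratedDeriv_succ, hev.deriv_eq,
      deriv_const_mul c ((itD_analytic hf n x hx).differentiableAt), ← iteratedDeriv_succ]

include hs in
lemma itD_shift {h : ℂ → ℂ} (hh : AnalyticOnNhd ℂ h s) (n : ℕ) :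
    ∀ x ∈ s, iteratedDeriv n (fun z => z * h z) x
      = x * iteratedDeriv n h x + (n : ℂ) * iteratedDeriv (n-1) h x := by
  induction n with
  | zero => intro x hx; simp
  | succ n IH =>
    intro x hx
    have hev : iteratedDeriv n (fun z => z * h z)
        =ᶠ[𝓝 x] (fun z => z * iteratedDeriv n h z + (n : ℂ) * iteratedDeriv (n-1) h z) := by
      filter_upwards [hs.mem_nhds hx] with y hy using IH y hy
    have d1 : DifferentiableAt ℂ (iteratedDeriv n h) x :=
      (itD_analytic hh n x hx).differentiableAt
    have d2 : DifferentiableAt ℂ (iteratedDeriv (n-1) h) x :=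
      (itD_analytic hh (n-1) x hx).differentiableAt
    rw [iteratedDeriv_succ, hev.deriv_eq,
      deriv_fun_add (differentiableAt_fun_id.fun_mul d1) (d2.const_mul _),
      deriv_const_mul _ d2, deriv_fun_mul differentiableAt_fun_id d1]
    have hnn : deriv (iteratedDeriv (n-1) h) x = iteratedDeriv ((n-1)+1) h x := by
      rw [iteratedDeriv_succ]
    rw [hnn, ← iteratedDeriv_succ]
    rcases Nat.eq_zero_or_pos n with h0 | h0
    · subst h0
      norm_num
      ring
    · rw [Nat.sub_add_cancel h0]
      have : ((n+1 : ℕ) : ℂ) = (n : ℂ) + 1 := by push_cast; ring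
      rw [Nat.add_sub_cancel, this]
      simp only [deriv_id'', one_mul]
      ring

end LocalDeriv

lemma itD_sq {s : Set ℂ} (hs : IsOpen s) (h0 : (0:ℂ) ∈ s) {h : ℂ → ℂ}
    (hh : AnalyticOnNhd ℂ h s) (n : ℕ) :
    iteratedDeriv n (fun z => z^2 * h z) 0
      = (n : ℂ) * ((n-1 : ℕ) : ℂ) * iteratedDeriv (n-2) h 0 := by
  have hzh : AnalyticOnNhd ℂ (fun z => z * h z) s := fun z hz => analyticAt_id.mul (hh z hz)
  have e : (fun z : ℂ => z^2 * h z) = (fun z => z * (z * h z)) := by funext z; ring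
  rw [e, itD_shift hs hzh n 0 h0, itD_shift hs hh (n-1) 0 h0]
  simp only [zero_mul, zero_add]
  rw [Nat.sub_sub]
  norm_num
  ring

lemma Pfun_zero (β : ℝ) : Pfun β 0 = 1 := by
  simp [Pfun]

lemma Pfun_deriv_zero (β : ℝ) : deriv (Pfun β) 0 = 2*(β:ℂ) := by
  have h := Pfun_deriv_eq β (mem_ball_self one_pos)
  simpa [Pfun_zero] using h

lemma Pfun_rec (β : ℝ) (n : ℕ) :
    iteratedDeriv (n+2) (Pfun β) 0 = 2*(β:ℂ) * iteratedDeriv (n+1) (Pfun β) 0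
      + ((n+1 : ℕ) : ℂ) * (n : ℂ) * iteratedDeriv n (Pfun β) 0 := by
  have hs : IsOpen (ball (0:ℂ) 1) := isOpen_ball
  have h0 : (0:ℂ) ∈ ball (0:ℂ) 1 := mem_ball_self one_pos
  have hPa := Pfun_analytic β
  have hga : AnalyticOnNhd ℂ (deriv (Pfun β)) (ball 0 1) := hPa.deriv
  have hev : deriv (Pfun β) =ᶠ[𝓝 (0:ℂ)]
      (fun z => (2*(β:ℂ)) * Pfun β z + z^2 * deriv (Pfun β) z) := by
    filter_upwards [hs.mem_nhds h0] with y hy using Pfun_deriv_eq β hy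
  have hf1 : AnalyticOnNhd ℂ (fun z => (2*(β:ℂ)) * Pfun β z) (ball 0 1) :=
    fun z hz => analyticAt_const.mul (hPa z hz)
  have hf2 : AnalyticOnNhd ℂ (fun z : ℂ => z^2 * deriv (Pfun β) z) (ball 0 1) :=
    fun z hz => (analyticAt_id.pow 2).mul (hga z hz)
  have h1 : iteratedDeriv (n+2) (Pfun β) 0 = iteratedDeriv (n+1) (deriv (Pfun β)) 0 := by
    rw [iteratedDeriv_succ']
  rw [h1, hev.iteratedDeriv_eq (n+1), itD_add hs hf1 hf2 (n+1) 0 h0,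
    itD_cmul hs _ hPa (n+1) 0 h0, itD_sq hs h0 hga (n+1)]
  have e1 : (n+1) - 1 = n := by omega
  have e2 : (n+1) - 2 = n - 1 := by omega
  rw [e1, e2]
  cases n with
  | zero => simp
  | succ m =>
    have e3 : (m+1) - 1 = m := by omega
    rw [e3, ← iteratedDeriv_succ']

lemma Pfun_coeff (β : ℝ) (n : ℕ) :
    iteratedDeriv n (Pfun β) 0 = (((n.factorial : ℝ) * bseq (2*β) n : ℝ) : ℂ) := by
  induction n using Nat.strong_induction_on with
  | _ n ih =>
    match n with
    | 0 => simpa [bseq] using Pfun_zero β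
    | 1 =>
      rw [iteratedDeriv_one, Pfun_deriv_zero]
      simp [bseq]
    | (m+2) =>
      rw [Pfun_rec β m, ih (m+1) (by omega), ih m (by omega)]
      have hb : bseq (2*β) (m+2) = ((m:ℝ) * bseq (2*β) m + (2*β) * bseq (2*β) (m+1))/(m+2) := rfl
      have hm2 : ((m:ℝ)+2) ≠ 0 := by positivity
      have hfac : (((m+2).factorial : ℝ)) = ((m:ℝ)+2) * ((m:ℝ)+1) * (m.factorial : ℝ) := by
        rw [show m+2 = (m+1)+1 from rfl, Nat.factorial_succ, Nat.factorial_succ]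
        push_cast
        ring
      have hm2c : ((m:ℂ)+2) ≠ 0 := by exact_mod_cast hm2
      rw [hb]
      push_cast [Nat.factorial_succ]
      field_simp
      ring


lemma itD_const_succ (c : ℂ) (n : ℕ) :
    iteratedDeriv (n+1) (fun _ : ℂ => c) = fun _ => (0:ℂ) := by
  induction n generalizing c with
  | zero =>
    funext x
    rw [iteratedDeriv_succ', iteratedDeriv_zero]
    simp
  | succ n IH =>
    rw [iteratedDeriv_succ']
    have h : deriv (fun _ : ℂ => c) = fun _ : ℂ => (0:ℂ) := by
      funext x; simp
    rw [h, IH 0]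

/-- For `0 < α ≤ 1`, the function `Q_α(z) = 2z P_α'(z) + 1 - P_α(z)²`, where
`P_α(z) = ((1+z)/(1-z))^α` (principal branch), has all Taylor coefficients about `0`
real and nonnegative; equivalently, all iterated derivatives at `0` are nonnegative reals. -/
theorem Qalpha_coeff_nonneg (α : ℝ) (hα0 : 0 < α) (hα1 : α ≤ 1) (n : ℕ) :
    ∃ r : ℝ, 0 ≤ r ∧
      iteratedDeriv n
        (fun z : ℂ =>
          2 * z * deriv (fun ζ : ℂ =>
              Complex.exp ((α : ℂ) * Complex.log ((1 + ζ) / (1 - ζ)))) z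
            + 1
            - Complex.exp ((α : ℂ) * Complex.log ((1 + z) / (1 - z))) ^ 2) 0
        = (r : ℂ) := by
  have hs : IsOpen (ball (0:ℂ) 1) := isOpen_ball
  have h0 : (0:ℂ) ∈ ball (0:ℂ) 1 := mem_ball_self one_pos
  have hPa := Pfun_analytic α
  have hga : AnalyticOnNhd ℂ (deriv (Pfun α)) (ball (0:ℂ) 1) := hPa.deriv
  have hP2a := Pfun_analytic (2*α)
  have hFeq : (fun z : ℂ =>
          2 * z * deriv (fun ζ : ℂ =>
              Complex.exp ((α : ℂ) * Complex.log ((1 + ζ) / (1 - ζ)))) z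
            + 1
            - Complex.exp ((α : ℂ) * Complex.log ((1 + z) / (1 - z))) ^ 2)
      = (fun z : ℂ => (2:ℂ) * (z * deriv (Pfun α) z)
          + ((fun _ : ℂ => (1:ℂ)) z - Pfun (2*α) z)) := by
    funext z
    have h2 : Complex.exp ((α:ℂ) * Complex.log ((1+z)/(1-z)))^2 = Pfun (2*α) z := by
      rw [pow_two, ← Complex.exp_add]
      simp only [Pfun]
      congr 1
      push_cast
      ring
    show 2 * z * deriv (Pfun α) z + 1
        - Complex.exp ((α : ℂ) * Complex.log ((1 + z) / (1 - z))) ^ 2 = _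
    rw [h2]
    ring
  rw [hFeq]
  have hA : AnalyticOnNhd ℂ (fun z : ℂ => (2:ℂ) * (z * deriv (Pfun α) z)) (ball (0:ℂ) 1) :=
    fun z hz => analyticAt_const.mul (analyticAt_id.mul (hga z hz))
  have hB : AnalyticOnNhd ℂ (fun z : ℂ => (fun _ : ℂ => (1:ℂ)) z - Pfun (2*α) z) (ball (0:ℂ) 1) :=
    fun z hz => analyticAt_const.sub (hP2a z hz)
  have hzg : AnalyticOnNhd ℂ (fun z : ℂ => z * deriv (Pfun α) z) (ball (0:ℂ) 1) :=
    fun z hz => analyticAt_id.mul (hga z hz)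
  have e1 : iteratedDeriv n (fun z : ℂ => (2:ℂ) * (z * deriv (Pfun α) z)
          + ((fun _ : ℂ => (1:ℂ)) z - Pfun (2*α) z)) 0
      = iteratedDeriv n (fun z : ℂ => (2:ℂ) * (z * deriv (Pfun α) z)) 0
        + iteratedDeriv n (fun z : ℂ => (fun _ : ℂ => (1:ℂ)) z - Pfun (2*α) z) 0 :=
    itD_add hs hA hB n 0 h0
  have e2 : iteratedDeriv n (fun z : ℂ => (fun _ : ℂ => (1:ℂ)) z - Pfun (2*α) z) 0
      = iteratedDeriv n (fun _ : ℂ => (1:ℂ)) 0 - iteratedDeriv n (Pfun (2*α)) 0 :=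
    itD_sub hs (fun z _ => analyticAt_const) hP2a n 0 h0
  have e3 : iteratedDeriv n (fun z : ℂ => (2:ℂ) * (z * deriv (Pfun α) z)) 0
      = 2 * iteratedDeriv n (fun z : ℂ => z * deriv (Pfun α) z) 0 :=
    itD_cmul hs 2 hzg n 0 h0
  have e4 : iteratedDeriv n (fun z : ℂ => z * deriv (Pfun α) z) 0
      = (0:ℂ) * iteratedDeriv n (deriv (Pfun α)) 0
        + (n : ℂ) * iteratedDeriv (n-1) (deriv (Pfun α)) 0 :=
    itD_shift hs hga n 0 h0
  rw [e1, e2, e3, e4, zero_mul, zero_add]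
  rw [Pfun_coeff (2*α) n]
  rcases n with _ | m
  · -- n = 0
    refine ⟨0, le_refl 0, ?_⟩
    simp [bseq]
  · -- n = m+1
    have e5 : iteratedDeriv ((m+1)-1) (deriv (Pfun α)) 0 = iteratedDeriv (m+1) (Pfun α) 0 := by
      rw [Nat.add_sub_cancel, ← iteratedDeriv_succ']
    rw [e5, itD_const_succ 1 m, Pfun_coeff α (m+1)]
    refine ⟨2 * (m+1) * ((m+1).factorial * bseq (2*α) (m+1))
      - (m+1).factorial * bseq (2*(2*α)) (m+1), ?_, ?_⟩
    · have hq := qlem hα0 hα1 (m+1) (by omega)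
      have hfp : (0:ℝ) ≤ ((m+1).factorial : ℝ) := by positivity
      push_cast at hq ⊢
      nlinarith [hq, hfp]
    · push_cast
      ring
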